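/- Let ℱ be the set of (undecorated) planar rooted forests and B⁺ the grafting operator. Then (kℱ, m, 1, Δ, ε, B⁺) is a cocycle bialgebra and is the initial object in the category of cocycle bialgebras: for every bialgebra (H, m_H, 1_H, Δ_H, ε_H) equipped with a linear operator P : H → H satisfying Δ_H ∘ P = (P ⊗ id) ∘ Δ_H + (id ⊗ P) ∘ Δ_H, there exists a unique algebra homomorphism φ : kℱ → H which is a bialgebra morphism and satisfies φ ∘ B⁺ = P ∘ φ. -/

import Mathlib

open scoped TensorProduct

universe u v w u'

/-- Decorated planar rooted trees: internal vertices are decorated by `Ω`,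
leaves are decorated by `X ⊔ Ω` (a leaf decorated by `ω : Ω` is `node ω []`). -/
inductive PTree (X : Type u) (Ω : Type v) : Type (max u v)
  | leafX : X → PTree X Ω
  | node : Ω → List (PTree X Ω) → PTree X Ω

namespace Moerdijk

variable {X : Type u} {Ω : Type v}

/-- `ℱ(X,Ω)`: decorated planar rooted forests, i.e. the free monoid on decorated
planar rooted trees under concatenation. -/
abbrev RForest (X : Type u) (Ω : Type v) := FreeMonoid (PTree X Ω)

/-- The single-vertex forest `•ₓ` for `x ∈ X`. -/
def leafF (x : X) : RForest X Ω := FreeMonoid.of (PTree.leafX x)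

/-- Grafting of a forest onto a new common root decorated by `ω`. -/
def graft (ω : Ω) (F : RForest X Ω) : RForest X Ω :=
  FreeMonoid.of (PTree.node ω (FreeMonoid.toList F))

variable (k : Type w) [CommRing k]

/-- `H(X,Ω)`: the free `k`-module on decorated planar rooted forests, a unital
associative algebra under the concatenation product. -/
abbrev RAlg (X : Type u) (Ω : Type v) := MonoidAlgebra k (RForest X Ω)

/-- The basis element of `H(X,Ω)` corresponding to a forest `F`. -/
noncomputable def ofF (F : RForest X Ω) : RAlg k X Ω := MonoidAlgebra.of k (RForest X Ω) F

/-- The grafting operator `B⁺_ω : H(X,Ω) → H(X,Ω)` as a linear map. -/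
noncomputable def Bplus (ω : Ω) : RAlg k X Ω →ₗ[k] RAlg k X Ω :=
  MonoidAlgebra.mapDomainLinearMap k k (graft ω)

/-- The value of the coproduct `Δ_λ` on a decorated planar rooted tree:
`Δ_λ(•ₓ) = •ₓ ⊗ 1 + 1 ⊗ •ₓ + λ •ₓ ⊗ •ₓ` and
`Δ_λ(B⁺_ω(F)) = (B⁺_ω ⊗ id)Δ_λ(F) + (id ⊗ B⁺_ω)Δ_λ(F)`. -/
noncomputable def DeltaT (lam : k) : PTree X Ω → (RAlg k X Ω ⊗[k] RAlg k X Ω)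
  | .leafX x =>
      ofF k (leafF x) ⊗ₜ[k] 1 + 1 ⊗ₜ[k] ofF k (leafF x)
        + lam • (ofF k (leafF x) ⊗ₜ[k] ofF k (leafF x))
  | .node ω ts =>
      ((TensorProduct.map (Bplus k ω) LinearMap.id
        + TensorProduct.map LinearMap.id (Bplus k ω) :
          (RAlg k X Ω ⊗[k] RAlg k X Ω) →ₗ[k] (RAlg k X Ω ⊗[k] RAlg k X Ω)))
        ((ts.attach.map fun t => DeltaT lam t.1).prod)
decreasing_by
  have := List.sizeOf_lt_of_mem t.2
  simp only [PTree.node.sizeOf_spec]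
  omega

/-- The value of the coproduct `Δ_λ` on a forest: `Δ_λ(T₁⋯Tₘ) = Δ_λ(T₁)⋯Δ_λ(Tₘ)`. -/
noncomputable def DeltaF (lam : k) (F : RForest X Ω) : RAlg k X Ω ⊗[k] RAlg k X Ω :=
  ((FreeMonoid.toList F).map (DeltaT k lam)).prod

/-- The coproduct `Δ_λ : H(X,Ω) → H(X,Ω) ⊗ H(X,Ω)`. -/
noncomputable def Delta (lam : k) : RAlg k X Ω →ₗ[k] (RAlg k X Ω ⊗[k] RAlg k X Ω) :=
  (Finsupp.lsum k fun F => LinearMap.toSpanSingleton k _ (DeltaF k lam F)) ∘ₗ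
    (MonoidAlgebra.coeffLinearEquiv k).toLinearMap

/-- The counit `ε : H(X,Ω) → k`, sending the empty forest to `1` and every
nonempty forest to `0`. -/
noncomputable def eps : RAlg k X Ω →ₗ[k] k :=
  (Finsupp.lsum k fun F => LinearMap.toSpanSingleton k k
    (if (FreeMonoid.toList F).isEmpty then (1 : k) else 0)) ∘ₗ
    (MonoidAlgebra.coeffLinearEquiv k).toLinearMap


section Basics

variable {X : Type u} {Ω : Type v} (k : Type w) [CommRing k]

/-- Strong induction principle for `PTree`. -/
lemma PTree.strongInd {motive : PTree X Ω → Prop}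
    (hleaf : ∀ x, motive (.leafX x))
    (hnode : ∀ ω ts, (∀ t ∈ ts, motive t) → motive (.node ω ts)) :
    ∀ t, motive t := by
  have key : ∀ n (t : PTree X Ω), sizeOf t ≤ n → motive t := by
    intro n
    induction n with
    | zero =>
      intro t ht
      cases t with
      | leafX x => exact hleaf x
      | node ω ts => simp at ht
    | succ n ih =>
      intro t ht
      cases t with
      | leafX x => exact hleaf x
      | node ω ts =>
        refine hnode ω ts fun s hs => ih s ?_
        have := List.sizeOf_lt_of_mem hs
        simp at ht; omega
  exact fun t => key (sizeOf t) t le_rfl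

lemma Bplus_single (ω : Ω) (F : RForest X Ω) (b : k) :
    Bplus k ω (MonoidAlgebra.single F b) = MonoidAlgebra.single (graft ω F) b := by
  classical
  simp [Bplus]

lemma Bplus_ofF (ω : Ω) (F : RForest X Ω) :
    Bplus k ω (ofF k F) = ofF k (graft ω F) := by
  simp [ofF, MonoidAlgebra.of_apply, Bplus_single]

lemma Delta_single (lam : k) (F : RForest X Ω) (b : k) :
    Delta k lam (MonoidAlgebra.single F b) = b • DeltaF k lam F := by
  simp [Delta, LinearMap.toSpanSingleton_apply]

lemma Delta_ofF (lam : k) (F : RForest X Ω) :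
    Delta k lam (ofF k F) = DeltaF k lam F := by
  simp [ofF, MonoidAlgebra.of_apply, Delta_single]

lemma eps_single (F : RForest X Ω) (b : k) :
    eps k (MonoidAlgebra.single F b)
      = if (FreeMonoid.toList F).isEmpty then b else 0 := by
  simp [eps, LinearMap.toSpanSingleton_apply, smul_eq_mul, mul_ite, mul_one, mul_zero]

lemma DeltaF_of (lam : k) (t : PTree X Ω) :
    DeltaF k lam (FreeMonoid.of t) = DeltaT k lam t := by
  simp [DeltaF, FreeMonoid.toList_of]

lemma DeltaF_one (lam : k) : DeltaF k lam (1 : RForest X Ω) = 1 := by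
  simp [DeltaF]

lemma DeltaF_mul (lam : k) (F G : RForest X Ω) :
    DeltaF k lam (F * G) = DeltaF k lam F * DeltaF k lam G := by
  simp [DeltaF, FreeMonoid.toList_mul]

lemma DeltaT_node (lam : k) (ω : Ω) (ts : List (PTree X Ω)) :
    DeltaT k lam (.node ω ts)
      = ((TensorProduct.map (Bplus k ω) LinearMap.id
          + TensorProduct.map LinearMap.id (Bplus k ω) :
            (RAlg k X Ω ⊗[k] RAlg k X Ω) →ₗ[k] (RAlg k X Ω ⊗[k] RAlg k X Ω)))
          (DeltaF k lam (FreeMonoid.ofList ts)) := by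
  rw [DeltaT]
  congr 1
  simp only [DeltaF, FreeMonoid.toList_ofList]
  congr 1
  exact List.attach_map_val

end Basics

section AlgLayer

variable {X : Type u} {Ω : Type v} (k : Type w) [CommRing k]

/-- `Δ_λ` on forests, as a monoid hom into the tensor square. -/
noncomputable def DeltaM (lam : k) : RForest X Ω →* (RAlg k X Ω ⊗[k] RAlg k X Ω) where
  toFun := DeltaF k lam
  map_one' := DeltaF_one k lam
  map_mul' := DeltaF_mul k lam

/-- `Δ_λ` as an algebra hom. -/
noncomputable def DeltaA (lam : k) : RAlg k X Ω →ₐ[k] (RAlg k X Ω ⊗[k] RAlg k X Ω) :=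
  MonoidAlgebra.lift k _ (RForest X Ω) (DeltaM k lam)

lemma DeltaA_apply (lam : k) (x : RAlg k X Ω) : DeltaA k lam x = Delta k lam x := by
  have : (DeltaA k lam (X := X) (Ω := Ω)).toLinearMap = Delta k lam := by
    refine MonoidAlgebra.lhom_ext' fun F => LinearMap.ext fun b => ?_
    show DeltaA k lam (MonoidAlgebra.single F b) = Delta k lam (MonoidAlgebra.single F b)
    rw [Delta_single]
    erw [MonoidAlgebra.lift_single]
    rfl
  exact DFunLike.congr_fun this x

/-- `ε` on forests, as a monoid hom. -/
noncomputable def epsM : RForest X Ω →* k where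
  toFun F := if (FreeMonoid.toList F).isEmpty then (1 : k) else 0
  map_one' := by simp [FreeMonoid.toList_one]
  map_mul' F G := by
    simp only [FreeMonoid.toList_mul]
    cases h1 : (FreeMonoid.toList F).isEmpty <;>
      cases h2 : (FreeMonoid.toList G).isEmpty <;>
        simp_all [List.isEmpty_iff, List.append_eq_nil_iff]

/-- `ε` as an algebra hom. -/
noncomputable def epsA : RAlg k X Ω →ₐ[k] k :=
  MonoidAlgebra.lift k _ (RForest X Ω) (epsM k)

lemma epsA_apply (x : RAlg k X Ω) : epsA k x = eps k x := by
  have : (epsA k (X := X) (Ω := Ω)).toLinearMap = eps k := by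
    refine MonoidAlgebra.lhom_ext' fun F => LinearMap.ext fun b => ?_
    show epsA k (MonoidAlgebra.single F b) = eps k (MonoidAlgebra.single F b)
    rw [eps_single]
    erw [MonoidAlgebra.lift_single]
    simp [epsM, smul_eq_mul, mul_ite, mul_one, mul_zero]
  exact DFunLike.congr_fun this x

lemma eps_Bplus (ω : Ω) (y : RAlg k X Ω) : eps k (Bplus k ω y) = 0 := by
  have : (eps k ∘ₗ Bplus k ω : RAlg k X Ω →ₗ[k] k) = 0 := by
    refine MonoidAlgebra.lhom_ext' fun F => LinearMap.ext fun b => ?_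
    show eps k (Bplus k ω (MonoidAlgebra.single F b)) = 0
    rw [Bplus_single, eps_single]
    simp [graft, FreeMonoid.toList_of]
  exact DFunLike.congr_fun this y

/-- The cocycle identity, at the level of elements. -/
lemma Delta_Bplus (lam : k) (ω : Ω) (y : RAlg k X Ω) :
    Delta k lam (Bplus k ω y)
      = TensorProduct.map (Bplus k ω) LinearMap.id (Delta k lam y)
        + TensorProduct.map LinearMap.id (Bplus k ω) (Delta k lam y) := by
  have : (Delta k lam ∘ₗ Bplus k ω : RAlg k X Ω →ₗ[k] _)
      = (TensorProduct.map (Bplus k ω) LinearMap.id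
          + TensorProduct.map LinearMap.id (Bplus k ω)) ∘ₗ Delta k lam := by
    refine MonoidAlgebra.lhom_ext' fun F => LinearMap.ext fun b => ?_
    have hg : DeltaF k lam (graft ω F)
        = (TensorProduct.map (Bplus k ω) LinearMap.id
            + TensorProduct.map LinearMap.id (Bplus k ω) :
              (RAlg k X Ω ⊗[k] RAlg k X Ω) →ₗ[k] _) (DeltaF k lam F) := by
      rw [graft, DeltaF_of, DeltaT_node]
      congr 2
    show Delta k lam (Bplus k ω (MonoidAlgebra.single F b))
        = (TensorProduct.map (Bplus k ω) LinearMap.id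
            + TensorProduct.map LinearMap.id (Bplus k ω) :
              (RAlg k X Ω ⊗[k] RAlg k X Ω) →ₗ[k] _) (Delta k lam (MonoidAlgebra.single F b))
    rw [Bplus_single, Delta_single, Delta_single, map_smul, hg]
  simpa using DFunLike.congr_fun this y

end AlgLayer

section TensorInfra

variable (k : Type w) [CommRing k]
variable {A B C A' B' : Type*} [Semiring A] [Algebra k A] [Semiring B] [Algebra k B]
  [Semiring C] [Algebra k C] [Semiring A'] [Algebra k A'] [Semiring B'] [Algebra k B']

lemma mapAlg_toLin (f : A →ₐ[k] A') (g : B →ₐ[k] B') :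
    (Algebra.TensorProduct.map f g).toLinearMap
      = TensorProduct.map f.toLinearMap g.toLinearMap := by
  apply TensorProduct.ext'
  intro a b
  simp

lemma assocAlg_toLin :
    (Algebra.TensorProduct.assoc k k k A B C).toLinearMap
      = (TensorProduct.assoc k A B C).toLinearMap := by
  apply TensorProduct.ext_threefold
  intro a b c
  simp

lemma lidAlg_toLin :
    (Algebra.TensorProduct.lid k A).toLinearMap = (TensorProduct.lid k A).toLinearMap := by
  apply TensorProduct.ext'
  intro a b
  simp

lemma ridAlg_toLin :
    (Algebra.TensorProduct.rid k k A).toLinearMap = (TensorProduct.rid k A).toLinearMap := by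
  apply TensorProduct.ext'
  intro a b
  simp

variable {V : Type*} [AddCommMonoid V] [Module k V]

lemma assoc_comm_left (f : V →ₗ[k] V) :
    (TensorProduct.assoc k V V V).toLinearMap
        ∘ₗ TensorProduct.map (TensorProduct.map f LinearMap.id) LinearMap.id
      = TensorProduct.map f LinearMap.id ∘ₗ (TensorProduct.assoc k V V V).toLinearMap := by
  apply TensorProduct.ext_threefold
  intro a b c
  simp

lemma assoc_comm_mid (f : V →ₗ[k] V) :
    (TensorProduct.assoc k V V V).toLinearMap
        ∘ₗ TensorProduct.map (TensorProduct.map LinearMap.id f) LinearMap.id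
      = TensorProduct.map LinearMap.id (TensorProduct.map f LinearMap.id)
          ∘ₗ (TensorProduct.assoc k V V V).toLinearMap := by
  apply TensorProduct.ext_threefold
  intro a b c
  simp

lemma assoc_comm_right (f : V →ₗ[k] V) :
    (TensorProduct.assoc k V V V).toLinearMap ∘ₗ TensorProduct.map LinearMap.id f
      = TensorProduct.map LinearMap.id (TensorProduct.map LinearMap.id f)
          ∘ₗ (TensorProduct.assoc k V V V).toLinearMap := by
  apply TensorProduct.ext_threefold
  intro a b c
  simp

end TensorInfra

section TensorInfra2
variable (k : Type w) [CommRing k]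
variable {A B A' B' C : Type*} [Semiring A] [Algebra k A] [Semiring B] [Algebra k B]
  [Semiring C] [Algebra k C] [Semiring A'] [Algebra k A'] [Semiring B'] [Algebra k B']

lemma mapAlg_apply (f : A →ₐ[k] A') (g : B →ₐ[k] B') (x : A ⊗[k] B) :
    Algebra.TensorProduct.map f g x
      = TensorProduct.map f.toLinearMap g.toLinearMap x := by
  exact DFunLike.congr_fun (mapAlg_toLin k f g) x

lemma assocAlg_apply (x : (A ⊗[k] B) ⊗[k] C) :
    Algebra.TensorProduct.assoc k k k A B C x = TensorProduct.assoc k A B C x := by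
  simpa using DFunLike.congr_fun (assocAlg_toLin k (A := A) (B := B) (C := C)) x

lemma lidAlg_apply (x : k ⊗[k] A) :
    Algebra.TensorProduct.lid k A x = TensorProduct.lid k A x := by
  simpa using DFunLike.congr_fun (lidAlg_toLin k (A := A)) x

lemma ridAlg_apply (x : A ⊗[k] k) :
    Algebra.TensorProduct.rid k k A x = TensorProduct.rid k A x := by
  simpa using DFunLike.congr_fun (ridAlg_toLin k (A := A)) x

end TensorInfra2

section Coassoc

variable {Ω : Type v} (k : Type w) [CommRing k] (lam : k)

/-- Abbreviation for the undecorated-leaf forest algebra. -/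
abbrev T0 (Ω : Type v) : Type (max v w) := RAlg k PEmpty.{1} Ω



lemma DeltaA_toLin : (DeltaA k lam (X := PEmpty.{1}) (Ω := Ω)).toLinearMap = Delta k lam :=
  LinearMap.ext fun x => DeltaA_apply k lam x

/-- The property of having compatible coassociativity, as a predicate on tensors. -/
def Qco (z : (T0 k Ω) ⊗[k] (T0 k Ω)) : Prop :=
  (TensorProduct.assoc k (T0 k Ω) (T0 k Ω) (T0 k Ω)).toLinearMap
      (TensorProduct.map (Delta k lam) LinearMap.id z)
    = TensorProduct.map LinearMap.id (Delta k lam) z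

/-- Left-hand side of coassociativity as an algebra hom on the tensor square. -/
noncomputable def coL : ((T0 k Ω) ⊗[k] (T0 k Ω)) →ₐ[k] (T0 k Ω) ⊗[k] ((T0 k Ω) ⊗[k] (T0 k Ω)) :=
  (Algebra.TensorProduct.assoc k k k (T0 k Ω) (T0 k Ω) (T0 k Ω)).toAlgHom.comp
    (Algebra.TensorProduct.map (DeltaA k lam) (AlgHom.id k (T0 k Ω)))

/-- Right-hand side of coassociativity as an algebra hom on the tensor square. -/
noncomputable def coR : ((T0 k Ω) ⊗[k] (T0 k Ω)) →ₐ[k] (T0 k Ω) ⊗[k] ((T0 k Ω) ⊗[k] (T0 k Ω)) :=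
  Algebra.TensorProduct.map (AlgHom.id k (T0 k Ω)) (DeltaA k lam)

lemma coL_apply (z : (T0 k Ω) ⊗[k] (T0 k Ω)) :
    coL k lam z
      = (TensorProduct.assoc k (T0 k Ω) (T0 k Ω) (T0 k Ω)).toLinearMap
          (TensorProduct.map (Delta k lam) LinearMap.id z) := by
  rw [coL, AlgHom.comp_apply, AlgEquiv.toAlgHom_eq_coe, AlgEquiv.coe_algHom, assocAlg_apply,
    mapAlg_apply, DeltaA_toLin]
  simp

lemma coR_apply (z : (T0 k Ω) ⊗[k] (T0 k Ω)) :
    coR k lam z = TensorProduct.map LinearMap.id (Delta k lam) z := by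
  rw [coR, mapAlg_apply, DeltaA_toLin]
  simp

lemma Qco_one : Qco k lam (1 : (T0 k Ω) ⊗[k] (T0 k Ω)) := by
  unfold Qco
  rw [← coL_apply, ← coR_apply]
  exact (coL k lam (Ω := Ω)).map_one'.trans (coR k lam (Ω := Ω)).map_one'.symm

lemma Qco_mul {x y : (T0 k Ω) ⊗[k] (T0 k Ω)} (hx : Qco k lam x) (hy : Qco k lam y) :
    Qco k lam (x * y) := by
  unfold Qco at *
  rw [← coL_apply, ← coR_apply, map_mul, map_mul, coL_apply, coL_apply, coR_apply, coR_apply,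
    hx, hy]

lemma Qco_DeltaT : ∀ t : PTree PEmpty.{1} Ω, Qco k lam (DeltaT k lam t) := by
  refine PTree.strongInd (fun x => x.elim) ?_
  intro ω ts ih
  -- first get the statement for the forest of subtrees
  have hforest : ∀ l : List (PTree PEmpty.{1} Ω), (∀ t ∈ l, Qco k lam (DeltaT k lam t)) →
      Qco k lam (DeltaF k lam (FreeMonoid.ofList l)) := by
    intro l
    induction l with
    | nil => intro _; simpa [DeltaF] using Qco_one k lam
    | cons t l ihl =>
      intro hl
      have h1 : DeltaF k lam (FreeMonoid.ofList (t :: l))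
          = DeltaT k lam t * DeltaF k lam (FreeMonoid.ofList l) := by
        simp [DeltaF, FreeMonoid.toList_ofList]
      rw [h1]
      exact Qco_mul k lam (hl t (by simp)) (ihl fun s hs => hl s (by simp [hs]))
  have hw := hforest ts ih
  set w := DeltaF k lam (FreeMonoid.ofList ts) with hwdef
  -- now the node case
  unfold Qco at hw ⊢
  rw [DeltaT_node]
  set D : T0 k Ω →ₗ[k] T0 k Ω ⊗[k] T0 k Ω := Delta k lam with hD
  set Bp : T0 k Ω →ₗ[k] T0 k Ω := Bplus k ω with hBp
  have e1 : TensorProduct.map D LinearMap.id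
        ∘ₗ TensorProduct.map Bp (LinearMap.id : (T0 k Ω) →ₗ[k] (T0 k Ω))
      = (TensorProduct.map (TensorProduct.map Bp LinearMap.id) LinearMap.id
          + TensorProduct.map (TensorProduct.map LinearMap.id Bp) LinearMap.id)
          ∘ₗ TensorProduct.map D LinearMap.id := by
    apply TensorProduct.ext'
    intro a b
    simp [hD, hBp, Delta_Bplus, TensorProduct.add_tmul]
  have e2 : TensorProduct.map D LinearMap.id
        ∘ₗ TensorProduct.map (LinearMap.id : (T0 k Ω) →ₗ[k] (T0 k Ω)) Bp
      = TensorProduct.map LinearMap.id Bp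
          ∘ₗ TensorProduct.map D LinearMap.id := by
    apply TensorProduct.ext'
    intro a b
    simp
  have e3 : TensorProduct.map LinearMap.id D
        ∘ₗ TensorProduct.map Bp (LinearMap.id : (T0 k Ω) →ₗ[k] (T0 k Ω))
      = TensorProduct.map Bp LinearMap.id
          ∘ₗ TensorProduct.map LinearMap.id D := by
    apply TensorProduct.ext'
    intro a b
    simp
  have e4 : TensorProduct.map LinearMap.id D
        ∘ₗ TensorProduct.map (LinearMap.id : (T0 k Ω) →ₗ[k] (T0 k Ω)) Bp
      = (TensorProduct.map LinearMap.id (TensorProduct.map Bp LinearMap.id)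
          + TensorProduct.map LinearMap.id (TensorProduct.map LinearMap.id Bp))
          ∘ₗ TensorProduct.map LinearMap.id D := by
    apply TensorProduct.ext'
    intro a b
    simp [hD, hBp, Delta_Bplus, TensorProduct.tmul_add]
  have t1 := LinearMap.congr_fun e1 w
  have t2 := LinearMap.congr_fun e2 w
  have t3 := LinearMap.congr_fun e3 w
  have t4 := LinearMap.congr_fun e4 w
  have a1 := LinearMap.congr_fun (assoc_comm_left k Bp)
    (TensorProduct.map D LinearMap.id w)
  have a2 := LinearMap.congr_fun (assoc_comm_mid k Bp)
    (TensorProduct.map D LinearMap.id w)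
  have a3 := LinearMap.congr_fun (assoc_comm_right k Bp)
    (TensorProduct.map D LinearMap.id w)
  simp only [LinearMap.comp_apply, LinearMap.add_apply] at t1 t2 t3 t4 a1 a2 a3
  simp only [LinearMap.add_apply, map_add]
  rw [t1, t2, t3, t4, map_add, a1, a2, a3, hw]
  abel

end Coassoc

section CounitLaws

variable {Ω : Type v} (k : Type w) [CommRing k] (lam : k)

lemma epsA_toLin : (epsA k (X := PEmpty.{1}) (Ω := Ω)).toLinearMap = eps k :=
  LinearMap.ext fun x => epsA_apply k x

lemma Qco_DeltaF (F : RForest PEmpty.{1} Ω) : Qco k lam (DeltaF k lam F) := by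
  have h : ∀ l : List (PTree PEmpty.{1} Ω),
      Qco k lam ((l.map (DeltaT k lam)).prod) := by
    intro l
    induction l with
    | nil => simpa using Qco_one k lam
    | cons t l ihl =>
      simpa using Qco_mul k lam (Qco_DeltaT k lam t) ihl
  simpa [DeltaF] using h (FreeMonoid.toList F)

/-- The left counit map, linear version. -/
noncomputable def cuL : (T0 k Ω) ⊗[k] (T0 k Ω) →ₗ[k] T0 k Ω :=
  (TensorProduct.lid k (T0 k Ω)).toLinearMap ∘ₗ TensorProduct.map (eps k) LinearMap.id

/-- The left counit map, algebra version. -/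
noncomputable def cuLA : ((T0 k Ω) ⊗[k] (T0 k Ω)) →ₐ[k] T0 k Ω :=
  (Algebra.TensorProduct.lid k (T0 k Ω)).toAlgHom.comp
    (Algebra.TensorProduct.map (epsA k) (AlgHom.id k (T0 k Ω)))

lemma cuLA_apply (z : (T0 k Ω) ⊗[k] (T0 k Ω)) : cuLA k z = cuL k z := by
  rw [cuLA, cuL, AlgHom.comp_apply, AlgEquiv.toAlgHom_eq_coe, AlgEquiv.coe_algHom, lidAlg_apply,
    mapAlg_apply, epsA_toLin]
  simp

/-- The right counit map, linear version. -/
noncomputable def cuR : (T0 k Ω) ⊗[k] (T0 k Ω) →ₗ[k] T0 k Ω :=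
  (TensorProduct.rid k (T0 k Ω)).toLinearMap ∘ₗ TensorProduct.map LinearMap.id (eps k)

/-- The right counit map, algebra version. -/
noncomputable def cuRA : ((T0 k Ω) ⊗[k] (T0 k Ω)) →ₐ[k] T0 k Ω :=
  (Algebra.TensorProduct.rid k k (T0 k Ω)).toAlgHom.comp
    (Algebra.TensorProduct.map (AlgHom.id k (T0 k Ω)) (epsA k))

lemma cuRA_apply (z : (T0 k Ω) ⊗[k] (T0 k Ω)) : cuRA k z = cuR k z := by
  rw [cuRA, cuR, AlgHom.comp_apply, AlgEquiv.toAlgHom_eq_coe, AlgEquiv.coe_algHom, ridAlg_apply,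
    mapAlg_apply, epsA_toLin]
  simp

lemma ofList_cons (t : PTree PEmpty.{1} Ω) (l : List (PTree PEmpty.{1} Ω)) :
    FreeMonoid.ofList (t :: l) = FreeMonoid.of t * FreeMonoid.ofList l := rfl

lemma cuL_DeltaT : ∀ t : PTree PEmpty.{1} Ω,
    cuL k (DeltaT k lam t) = ofF k (FreeMonoid.of t) := by
  refine PTree.strongInd (fun x => x.elim) ?_
  intro ω ts ih
  have hforest : ∀ l : List (PTree PEmpty.{1} Ω),
      (∀ t ∈ l, cuL k (DeltaT k lam t) = ofF k (FreeMonoid.of t)) →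
      cuL k (DeltaF k lam (FreeMonoid.ofList l)) = ofF k (FreeMonoid.ofList l) := by
    intro l
    induction l with
    | nil =>
      intro _
      have h1 : DeltaF k lam (FreeMonoid.ofList ([] : List (PTree PEmpty.{1} Ω))) = 1 := by
        simp [DeltaF]
      rw [h1, ← cuLA_apply, map_one]
      rfl
    | cons t l ihl =>
      intro hl
      have h1 : DeltaF k lam (FreeMonoid.ofList (t :: l))
          = DeltaT k lam t * DeltaF k lam (FreeMonoid.ofList l) := by
        simp [DeltaF, FreeMonoid.toList_ofList]
      rw [h1, ← cuLA_apply, map_mul, cuLA_apply, cuLA_apply, hl t (by simp),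
        ihl fun s hs => hl s (by simp [hs]), ofList_cons]
      exact (map_mul (MonoidAlgebra.of k (RForest PEmpty.{1} Ω)) _ _).symm
  have hw := hforest ts ih
  rw [DeltaT_node]
  have e0 : cuL k (Ω := Ω) ∘ₗ TensorProduct.map (Bplus k ω) LinearMap.id = 0 := by
    apply TensorProduct.ext'
    intro a b
    simp [cuL, eps_Bplus]
  have e1 : cuL k (Ω := Ω) ∘ₗ TensorProduct.map LinearMap.id (Bplus k ω)
      = Bplus k ω ∘ₗ cuL k := by
    apply TensorProduct.ext'
    intro a b
    simp [cuL, TensorProduct.smul_tmul', map_smul]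
  have t0 := LinearMap.congr_fun e0 (DeltaF k lam (FreeMonoid.ofList ts))
  have t1 := LinearMap.congr_fun e1 (DeltaF k lam (FreeMonoid.ofList ts))
  simp only [LinearMap.comp_apply, LinearMap.zero_apply] at t0 t1
  rw [LinearMap.add_apply, map_add, t0, t1, hw, zero_add, Bplus_ofF]
  simp [graft, FreeMonoid.toList_ofList]

lemma cuR_DeltaT : ∀ t : PTree PEmpty.{1} Ω,
    cuR k (DeltaT k lam t) = ofF k (FreeMonoid.of t) := by
  refine PTree.strongInd (fun x => x.elim) ?_
  intro ω ts ih
  have hforest : ∀ l : List (PTree PEmpty.{1} Ω),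
      (∀ t ∈ l, cuR k (DeltaT k lam t) = ofF k (FreeMonoid.of t)) →
      cuR k (DeltaF k lam (FreeMonoid.ofList l)) = ofF k (FreeMonoid.ofList l) := by
    intro l
    induction l with
    | nil =>
      intro _
      have h1 : DeltaF k lam (FreeMonoid.ofList ([] : List (PTree PEmpty.{1} Ω))) = 1 := by
        simp [DeltaF]
      rw [h1, ← cuRA_apply, map_one]
      rfl
    | cons t l ihl =>
      intro hl
      have h1 : DeltaF k lam (FreeMonoid.ofList (t :: l))
          = DeltaT k lam t * DeltaF k lam (FreeMonoid.ofList l) := by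
        simp [DeltaF, FreeMonoid.toList_ofList]
      rw [h1, ← cuRA_apply, map_mul, cuRA_apply, cuRA_apply, hl t (by simp),
        ihl fun s hs => hl s (by simp [hs]), ofList_cons]
      exact (map_mul (MonoidAlgebra.of k (RForest PEmpty.{1} Ω)) _ _).symm
  have hw := hforest ts ih
  rw [DeltaT_node]
  have e0 : cuR k (Ω := Ω) ∘ₗ TensorProduct.map LinearMap.id (Bplus k ω) = 0 := by
    apply TensorProduct.ext'
    intro a b
    simp [cuR, eps_Bplus]
  have e1 : cuR k (Ω := Ω) ∘ₗ TensorProduct.map (Bplus k ω) LinearMap.id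
      = Bplus k ω ∘ₗ cuR k := by
    apply TensorProduct.ext'
    intro a b
    simp [cuR, TensorProduct.smul_tmul', map_smul]
  have t0 := LinearMap.congr_fun e0 (DeltaF k lam (FreeMonoid.ofList ts))
  have t1 := LinearMap.congr_fun e1 (DeltaF k lam (FreeMonoid.ofList ts))
  simp only [LinearMap.comp_apply, LinearMap.zero_apply] at t0 t1
  rw [LinearMap.add_apply, map_add, t0, t1, hw, add_zero, Bplus_ofF]
  simp [graft, FreeMonoid.toList_ofList]

lemma cuL_DeltaF (F : RForest PEmpty.{1} Ω) :
    cuL k (DeltaF k lam F) = ofF k F := by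
  have h : ∀ l : List (PTree PEmpty.{1} Ω),
      cuL k (DeltaF k lam (FreeMonoid.ofList l)) = ofF k (FreeMonoid.ofList l) := by
    intro l
    induction l with
    | nil =>
      have h1 : DeltaF k lam (FreeMonoid.ofList ([] : List (PTree PEmpty.{1} Ω))) = 1 := by
        simp [DeltaF]
      rw [h1, ← cuLA_apply, map_one]
      rfl
    | cons t l ihl =>
      have h1 : DeltaF k lam (FreeMonoid.ofList (t :: l))
          = DeltaT k lam t * DeltaF k lam (FreeMonoid.ofList l) := by
        simp [DeltaF, FreeMonoid.toList_ofList]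
      rw [h1, ← cuLA_apply, map_mul, cuLA_apply, cuLA_apply, cuL_DeltaT, ihl, ofList_cons]
      exact (map_mul (MonoidAlgebra.of k (RForest PEmpty.{1} Ω)) _ _).symm
  have := h (FreeMonoid.toList F)
  simpa [FreeMonoid.ofList_toList] using this

lemma cuR_DeltaF (F : RForest PEmpty.{1} Ω) :
    cuR k (DeltaF k lam F) = ofF k F := by
  have h : ∀ l : List (PTree PEmpty.{1} Ω),
      cuR k (DeltaF k lam (FreeMonoid.ofList l)) = ofF k (FreeMonoid.ofList l) := by
    intro l
    induction l with
    | nil =>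
      have h1 : DeltaF k lam (FreeMonoid.ofList ([] : List (PTree PEmpty.{1} Ω))) = 1 := by
        simp [DeltaF]
      rw [h1, ← cuRA_apply, map_one]
      rfl
    | cons t l ihl =>
      have h1 : DeltaF k lam (FreeMonoid.ofList (t :: l))
          = DeltaT k lam t * DeltaF k lam (FreeMonoid.ofList l) := by
        simp [DeltaF, FreeMonoid.toList_ofList]
      rw [h1, ← cuRA_apply, map_mul, cuRA_apply, cuRA_apply, cuR_DeltaT, ihl, ofList_cons]
      exact (map_mul (MonoidAlgebra.of k (RForest PEmpty.{1} Ω)) _ _).symm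
  have := h (FreeMonoid.toList F)
  simpa [FreeMonoid.ofList_toList] using this

end CounitLaws

section Initiality

variable {Ω : Type v} (k : Type w) [CommRing k]
variable {H' : Type u'} [Semiring H'] [Bialgebra k H']

/-- The unique morphism on trees: `φ(B⁺_ω(F)) = P(φ(F))`. -/
noncomputable def phiT (P : H' →ₗ[k] H') : PTree PEmpty.{1} Ω → H'
  | .leafX x => x.elim
  | .node _ ts => P ((ts.attach.map fun t => phiT P t.1).prod)
decreasing_by
  have := List.sizeOf_lt_of_mem t.2
  simp only [PTree.node.sizeOf_spec]
  omega

lemma phiT_node (P : H' →ₗ[k] H') (ω : Ω) (ts : List (PTree PEmpty.{1} Ω)) :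
    phiT k P (.node ω ts) = P ((ts.map (phiT k P)).prod) := by
  rw [phiT]
  congr 2
  exact List.attach_map_val

/-- The unique morphism, as an algebra hom. -/
noncomputable def phi (P : H' →ₗ[k] H') : T0 k Ω →ₐ[k] H' :=
  MonoidAlgebra.lift k H' (RForest PEmpty.{1} Ω) (FreeMonoid.lift (phiT k P))

lemma phi_single (P : H' →ₗ[k] H') (F : RForest PEmpty.{1} Ω) (b : k) :
    phi k P (MonoidAlgebra.single F b)
      = b • ((FreeMonoid.toList F).map (phiT k P)).prod := by
  rw [phi]
  erw [MonoidAlgebra.lift_single]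
  rw [FreeMonoid.lift_apply]

lemma phi_ofF (P : H' →ₗ[k] H') (F : RForest PEmpty.{1} Ω) :
    phi k P (ofF k F) = ((FreeMonoid.toList F).map (phiT k P)).prod := by
  rw [ofF, MonoidAlgebra.of_apply]
  rw [phi_single, one_smul]

lemma phi_Bplus (P : H' →ₗ[k] H') (ω : Ω) (y : T0 k Ω) :
    phi k P (Bplus k ω y) = P (phi k P y) := by
  have h : (phi k P (Ω := Ω)).toLinearMap ∘ₗ Bplus k ω = P ∘ₗ (phi k P).toLinearMap := by
    refine MonoidAlgebra.lhom_ext' fun F => LinearMap.ext fun b => ?_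
    show phi k P (Bplus k ω (MonoidAlgebra.single F b)) = P (phi k P (MonoidAlgebra.single F b))
    rw [Bplus_single, phi_single, phi_single, map_smul]
    congr 1
    have : FreeMonoid.toList (graft ω F) = [PTree.node ω (FreeMonoid.toList F)] := by
      simp [graft, FreeMonoid.toList_of]
    rw [this]
    simp [phiT_node]
  exact DFunLike.congr_fun h y

variable (P : H' →ₗ[k] H')
variable (hP : ∀ y : H', Coalgebra.comul (R := k) (P y)
    = TensorProduct.map P LinearMap.id (Coalgebra.comul (R := k) y)
      + TensorProduct.map LinearMap.id P (Coalgebra.comul (R := k) y))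

include hP

lemma counit_P (y : H') : Coalgebra.counit (R := k) (P y) = 0 := by
  classical
  set ε : H' →ₗ[k] k := Coalgebra.counit with hε
  have c1 : ∀ x : H', (TensorProduct.lid k k) (TensorProduct.map ε ε (Coalgebra.comul x))
      = ε x := by
    intro x
    rw [← LinearMap.lTensor_comp_rTensor, LinearMap.comp_apply, hε,
      Coalgebra.rTensor_counit_comul, LinearMap.lTensor_tmul]
    simp
  have key := congrArg (fun z => (TensorProduct.lid k k) (TensorProduct.map ε ε z)) (hP y)
  simp only [map_add] at key
  rw [c1] at key
  have c2 : (TensorProduct.lid k k)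
      (TensorProduct.map ε ε (TensorProduct.map P LinearMap.id (Coalgebra.comul (R := k) y)))
      = ε (P y) := by
    rw [← LinearMap.comp_apply (TensorProduct.map ε ε), ← TensorProduct.map_comp]
    have h2 : TensorProduct.map (ε ∘ₗ P) (ε ∘ₗ LinearMap.id)
        = LinearMap.rTensor k (ε ∘ₗ P) ∘ₗ LinearMap.lTensor H' ε := by
      rw [LinearMap.rTensor_comp_lTensor]
      simp
    rw [h2, LinearMap.comp_apply, hε, Coalgebra.lTensor_counit_comul, LinearMap.rTensor_tmul]
    simp
  have c3 : (TensorProduct.lid k k)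
      (TensorProduct.map ε ε (TensorProduct.map LinearMap.id P (Coalgebra.comul (R := k) y)))
      = ε (P y) := by
    rw [← LinearMap.comp_apply (TensorProduct.map ε ε), ← TensorProduct.map_comp]
    have h2 : TensorProduct.map (ε ∘ₗ LinearMap.id) (ε ∘ₗ P)
        = LinearMap.lTensor k (ε ∘ₗ P) ∘ₗ LinearMap.rTensor H' ε := by
      rw [LinearMap.lTensor_comp_rTensor]
      simp
    rw [h2, LinearMap.comp_apply, hε, Coalgebra.rTensor_counit_comul, LinearMap.lTensor_tmul]
    simp
  rw [c2, c3] at key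
  exact left_eq_add.mp key

lemma phi_comul_DeltaT (lam : k) :
    ∀ t : PTree PEmpty.{1} Ω,
      Coalgebra.comul (R := k) (phiT k P t)
        = TensorProduct.map (phi k P).toLinearMap (phi k P).toLinearMap
            (DeltaT k lam t) := by
  refine PTree.strongInd (fun x => x.elim) ?_
  intro ω ts ih
  have hofF : ∀ l : List (PTree PEmpty.{1} Ω),
      phi k P (ofF k (FreeMonoid.ofList l)) = (l.map (phiT k P)).prod := by
    intro l
    rw [phi_ofF, FreeMonoid.toList_ofList]
  have hforest : ∀ l : List (PTree PEmpty.{1} Ω),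
      (∀ t ∈ l, Coalgebra.comul (R := k) (phiT k P t)
        = TensorProduct.map (phi k P).toLinearMap (phi k P).toLinearMap (DeltaT k lam t)) →
      Coalgebra.comul (R := k) ((l.map (phiT k P)).prod)
        = TensorProduct.map (phi k P).toLinearMap (phi k P).toLinearMap
            (DeltaF k lam (FreeMonoid.ofList l)) := by
    intro l
    induction l with
    | nil =>
      intro _
      have h1 : DeltaF k lam (FreeMonoid.ofList ([] : List (PTree PEmpty.{1} Ω))) = 1 := by
        simp [DeltaF]
      rw [h1, ← mapAlg_apply k (phi k P) (phi k P)]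
      simp [Bialgebra.comul_one]
    | cons t l ihl =>
      intro hl
      have h1 : DeltaF k lam (FreeMonoid.ofList (t :: l))
          = DeltaT k lam t * DeltaF k lam (FreeMonoid.ofList l) := by
        simp [DeltaF, FreeMonoid.toList_ofList]
      rw [h1, ← mapAlg_apply k (phi k P) (phi k P), map_mul, List.map_cons, List.prod_cons,
        Bialgebra.comul_mul, hl t (by simp), ihl fun s hs => hl s (by simp [hs]),
        mapAlg_apply, mapAlg_apply]
  have hw := hforest ts ih
  rw [phiT_node, DeltaT_node, hP]
  have hcompL : TensorProduct.map P LinearMap.id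
        ∘ₗ TensorProduct.map (phi k P (Ω := Ω)).toLinearMap (phi k P (Ω := Ω)).toLinearMap
      = TensorProduct.map (phi k P (Ω := Ω)).toLinearMap (phi k P (Ω := Ω)).toLinearMap
        ∘ₗ TensorProduct.map (Bplus k ω) LinearMap.id := by
    apply TensorProduct.ext'
    intro a b
    simp [phi_Bplus]
  have hcompR : TensorProduct.map LinearMap.id P
        ∘ₗ TensorProduct.map (phi k P (Ω := Ω)).toLinearMap (phi k P (Ω := Ω)).toLinearMap
      = TensorProduct.map (phi k P (Ω := Ω)).toLinearMap (phi k P (Ω := Ω)).toLinearMap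
        ∘ₗ TensorProduct.map LinearMap.id (Bplus k ω) := by
    apply TensorProduct.ext'
    intro a b
    simp [phi_Bplus]
  have t1 := LinearMap.congr_fun hcompL (DeltaF k lam (FreeMonoid.ofList ts))
  have t2 := LinearMap.congr_fun hcompR (DeltaF k lam (FreeMonoid.ofList ts))
  simp only [LinearMap.comp_apply] at t1 t2
  rw [hw, t1, t2, LinearMap.add_apply, map_add]

lemma phi_comul (lam : k) (y : T0 k Ω) :
    Coalgebra.comul (R := k) (phi k P y)
      = TensorProduct.map (phi k P).toLinearMap (phi k P).toLinearMap (Delta k lam y) := by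
  have hforest : ∀ l : List (PTree PEmpty.{1} Ω),
      Coalgebra.comul (R := k) ((l.map (phiT k P)).prod)
        = TensorProduct.map (phi k P).toLinearMap (phi k P).toLinearMap
            (DeltaF k lam (FreeMonoid.ofList l)) := by
    intro l
    induction l with
    | nil =>
      have h1 : DeltaF k lam (FreeMonoid.ofList ([] : List (PTree PEmpty.{1} Ω))) = 1 := by
        simp [DeltaF]
      rw [h1, ← mapAlg_apply k (phi k P) (phi k P)]
      simp [Bialgebra.comul_one]
    | cons t l ihl =>
      have h1 : DeltaF k lam (FreeMonoid.ofList (t :: l))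
          = DeltaT k lam t * DeltaF k lam (FreeMonoid.ofList l) := by
        simp [DeltaF, FreeMonoid.toList_ofList]
      rw [h1, ← mapAlg_apply k (phi k P) (phi k P), map_mul, List.map_cons, List.prod_cons,
        Bialgebra.comul_mul, phi_comul_DeltaT k P hP lam t, ihl, mapAlg_apply, mapAlg_apply]
  have h : ∀ F : RForest PEmpty.{1} Ω, ∀ b : k,
      Coalgebra.comul (R := k) (phi k P (MonoidAlgebra.single F b))
        = TensorProduct.map (phi k P).toLinearMap (phi k P).toLinearMap
            (Delta k lam (MonoidAlgebra.single F b)) := by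
    intro F b
    rw [phi_single, Delta_single, map_smul, map_smul]
    have := hforest (FreeMonoid.toList F)
    rw [FreeMonoid.ofList_toList] at this
    rw [this, DeltaF]
  have hlin : (Bialgebra.comulAlgHom k H').toLinearMap ∘ₗ (phi k P (Ω := Ω)).toLinearMap
      = TensorProduct.map (phi k P).toLinearMap (phi k P).toLinearMap ∘ₗ Delta k lam := by
    refine MonoidAlgebra.lhom_ext' fun F => LinearMap.ext fun b => ?_
    have := h F b
    simpa [Bialgebra.comulAlgHom_apply] using this
  have := DFunLike.congr_fun hlin y
  simpa [Bialgebra.comulAlgHom_apply] using this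

lemma phi_counit (y : T0 k Ω) :
    Coalgebra.counit (R := k) (phi k P y) = eps k y := by
  have hlin : (Bialgebra.counitAlgHom k H').toLinearMap ∘ₗ (phi k P (Ω := Ω)).toLinearMap
      = eps k := by
    refine MonoidAlgebra.lhom_ext' fun F => LinearMap.ext fun b => ?_
    have : Coalgebra.counit (R := k) (phi k P (MonoidAlgebra.single F b))
        = eps k (MonoidAlgebra.single F b) := by
      rw [phi_single, eps_single, map_smul]
      rcases hF : FreeMonoid.toList F with _ | ⟨t, l⟩
      · simp [Bialgebra.counit_one]
      · cases t with
        | leafX x => exact x.elim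
        | node ω ts =>
          simp only [List.map_cons, List.prod_cons, List.isEmpty_cons, Bialgebra.counit_mul]
          rw [phiT_node, counit_P k P hP]
          simp
    simpa [Bialgebra.counitAlgHom_apply] using this
  have := DFunLike.congr_fun hlin y
  simpa [Bialgebra.counitAlgHom_apply] using this

omit hP

lemma phi_unique (ψ : T0 k Ω →ₐ[k] H')
    (hB : ∀ (ω : Ω) (y : T0 k Ω), ψ (Bplus k ω y) = P (ψ y)) :
    ψ = phi k P := by
  refine MonoidAlgebra.algHom_ext ?_ (Subsingleton.elim _ _)
  intro F
  have htree : ∀ t : PTree PEmpty.{1} Ω,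
      ψ (ofF k (FreeMonoid.of t)) = phi k P (ofF k (FreeMonoid.of t)) := by
    refine PTree.strongInd (fun x => x.elim) ?_
    intro ω ts ih
    have hforest : ∀ l : List (PTree PEmpty.{1} Ω),
        (∀ t ∈ l, ψ (ofF k (FreeMonoid.of t)) = phi k P (ofF k (FreeMonoid.of t))) →
        ψ (ofF k (FreeMonoid.ofList l)) = phi k P (ofF k (FreeMonoid.ofList l)) := by
      intro l
      induction l with
      | nil =>
        intro _
        have h1 : (FreeMonoid.ofList ([] : List (PTree PEmpty.{1} Ω)))
            = (1 : RForest PEmpty.{1} Ω) := rfl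
        rw [h1, ofF, map_one, map_one, map_one]
      | cons t l ihl =>
        intro hl
        rw [ofList_cons, ofF, map_mul, map_mul, map_mul]
        rw [← ofF, ← ofF]
        rw [hl t (by simp), ihl fun s hs => hl s (by simp [hs])]
    have hnode : ofF k (FreeMonoid.of (PTree.node ω ts))
        = Bplus k ω (ofF k (FreeMonoid.ofList ts)) := by
      rw [Bplus_ofF]
      simp [graft, FreeMonoid.toList_ofList]
    rw [hnode, hB, phi_Bplus, hforest ts ih]
  have h1 : (MonoidAlgebra.single F 1 : T0 k Ω) = ofF k F := by
    rw [ofF, MonoidAlgebra.of_apply]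
  rw [h1]
  have h : ∀ l : List (PTree PEmpty.{1} Ω),
      ψ (ofF k (FreeMonoid.ofList l)) = phi k P (ofF k (FreeMonoid.ofList l)) := by
    intro l
    induction l with
    | nil =>
      have h1 : (FreeMonoid.ofList ([] : List (PTree PEmpty.{1} Ω)))
          = (1 : RForest PEmpty.{1} Ω) := rfl
      rw [h1, ofF, map_one, map_one, map_one]
    | cons t l ihl =>
      rw [ofList_cons, ofF, map_mul, map_mul, map_mul]
      rw [← ofF, ← ofF]
      rw [htree t, ihl]
  have := h (FreeMonoid.toList F)
  rwa [FreeMonoid.ofList_toList] at this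

end Initiality
/-- `(kℱ, m, 1, Δ, ε, B⁺)`, on undecorated planar rooted forests (all vertices carrying
the unique decoration), is a cocycle bialgebra and is the initial object in the category
of cocycle bialgebras. -/
theorem initial_cocycle_bialgebra_undecorated :
    -- (i) `(kℱ, m, 1, Δ, ε, B⁺)` is a cocycle bialgebra
    (((TensorProduct.assoc k (RAlg k PEmpty.{1} PUnit.{1}) (RAlg k PEmpty.{1} PUnit.{1})
          (RAlg k PEmpty.{1} PUnit.{1})).toLinearMap ∘ₗ
        TensorProduct.map (Delta k 0) LinearMap.id ∘ₗ Delta k 0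
      = TensorProduct.map LinearMap.id (Delta k 0) ∘ₗ Delta k 0) ∧
    ((TensorProduct.lid k (RAlg k PEmpty.{1} PUnit.{1})).toLinearMap ∘ₗ
        TensorProduct.map (eps k) LinearMap.id ∘ₗ Delta k 0
      = (LinearMap.id : RAlg k PEmpty.{1} PUnit.{1} →ₗ[k] RAlg k PEmpty.{1} PUnit.{1})) ∧
    ((TensorProduct.rid k (RAlg k PEmpty.{1} PUnit.{1})).toLinearMap ∘ₗ
        TensorProduct.map LinearMap.id (eps k) ∘ₗ Delta k 0
      = (LinearMap.id : RAlg k PEmpty.{1} PUnit.{1} →ₗ[k] RAlg k PEmpty.{1} PUnit.{1})) ∧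
    (∀ x y : RAlg k PEmpty.{1} PUnit.{1}, Delta k 0 (x * y) = Delta k 0 x * Delta k 0 y) ∧
    (Delta k (0 : k) (1 : RAlg k PEmpty.{1} PUnit.{1}) = 1) ∧
    (∀ x y : RAlg k PEmpty.{1} PUnit.{1}, eps k (x * y) = eps k x * eps k y) ∧
    (eps k (1 : RAlg k PEmpty.{1} PUnit.{1}) = 1) ∧
    (∀ y : RAlg k PEmpty.{1} PUnit.{1}, Delta k 0 (Bplus k PUnit.unit y)
      = TensorProduct.map (Bplus k PUnit.unit) LinearMap.id (Delta k 0 y)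
        + TensorProduct.map LinearMap.id (Bplus k PUnit.unit) (Delta k 0 y))) ∧
    -- (ii) initiality
    (∀ (H' : Type u') [Semiring H'] [Bialgebra k H'] (P : H' →ₗ[k] H'),
      (∀ y : H', Coalgebra.comul (R := k) (P y)
        = TensorProduct.map P LinearMap.id (Coalgebra.comul (R := k) y)
          + TensorProduct.map LinearMap.id P (Coalgebra.comul (R := k) y)) →
      ∃! φ : RAlg k PEmpty.{1} PUnit.{1} →ₐ[k] H',
        (∀ y : RAlg k PEmpty.{1} PUnit.{1}, φ (Bplus k PUnit.unit y) = P (φ y)) ∧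
        (∀ y : RAlg k PEmpty.{1} PUnit.{1}, Coalgebra.comul (R := k) (φ y)
          = TensorProduct.map φ.toLinearMap φ.toLinearMap (Delta k 0 y)) ∧
        (∀ y : RAlg k PEmpty.{1} PUnit.{1}, Coalgebra.counit (R := k) (φ y) = eps k y)) := by
  constructor
  · refine ⟨?_, ?_, ?_, ?_, ?_, ?_, ?_, ?_⟩
    · -- coassociativity
      refine MonoidAlgebra.lhom_ext' fun F => LinearMap.ext fun b => ?_
      simp only [LinearMap.comp_apply]
      erw [Delta_single, map_smul, map_smul, map_smul]
      exact congrArg (b • ·) (Qco_DeltaF k 0 F)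
    · -- left counit
      refine MonoidAlgebra.lhom_ext' fun F => LinearMap.ext fun b => ?_
      simp only [LinearMap.comp_apply, LinearMap.id_apply]
      erw [Delta_single, map_smul, map_smul]
      have := cuL_DeltaF k 0 F
      simp only [cuL, LinearMap.comp_apply] at this
      rw [this, ofF, MonoidAlgebra.of_apply]
      rw [MonoidAlgebra.smul_single', mul_one]
      rfl
    · -- right counit
      refine MonoidAlgebra.lhom_ext' fun F => LinearMap.ext fun b => ?_
      simp only [LinearMap.comp_apply, LinearMap.id_apply]
      erw [Delta_single, map_smul, map_smul]
      have := cuR_DeltaF k 0 F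
      simp only [cuR, LinearMap.comp_apply] at this
      rw [this, ofF, MonoidAlgebra.of_apply]
      rw [MonoidAlgebra.smul_single', mul_one]
      rfl
    · -- Delta multiplicative
      intro x y
      rw [← DeltaA_apply, ← DeltaA_apply, ← DeltaA_apply, map_mul]
    · -- Delta unital
      rw [← DeltaA_apply, map_one]
    · -- eps multiplicative
      intro x y
      rw [← epsA_apply, ← epsA_apply, ← epsA_apply, map_mul]
    · -- eps unital
      rw [← epsA_apply, map_one]
    · -- cocycle
      intro y
      exact Delta_Bplus k 0 PUnit.unit y
  · -- initiality
    intro H' _ _ P hP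
    refine ⟨phi k P, ⟨fun y => phi_Bplus k P PUnit.unit y,
      fun y => phi_comul k P hP 0 y, fun y => phi_counit k P hP y⟩, ?_⟩
    rintro ψ ⟨h1, _, _⟩
    exact phi_unique k P ψ fun ω y => by cases ω; exact h1 y

end Moerdijk
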